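/- Gap in the two-point family: fix h > 0, let m̃ be a random variable on [0,1] with density proportional to t ↦ sech((t−1)/h), let σ̃² be an independent random variable on [0,1/4] with density proportional to t ↦ sech(t/h), and set W = m̃² + σ̃². Define Φ(p) = E[|p − m̃|] + E[|p² − W|] for p ∈ [0,1]. Then for p₀ = 1/16 and any ε with 0 < ε ≤ 1/16, writing p₁ = p₀ + ε, one has Φ(p₀) − Φ(p₁) ≥ (9/16)·ε ≥ ε/2. -/

import Mathlib

open MeasureTheory ProbabilityTheory
open scoped ENNReal

private lemma ae_mem_of_law {Ω : Type*} [MeasurableSpace Ω] (μ : Measure Ω)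
    (X : Ω → ℝ) (hX : Measurable X) {s : Set ℝ} (hs : MeasurableSet s)
    (c : ℝ≥0∞) (g : ℝ → ℝ≥0∞)
    (hlaw : Measure.map X μ = c • ((volume.restrict s).withDensity g)) :
    ∀ᵐ ω ∂μ, X ω ∈ s := by
  have h0 : μ (X ⁻¹' sᶜ) = 0 := by
    rw [← Measure.map_apply hX hs.compl, hlaw, Measure.smul_apply,
      withDensity_apply _ hs.compl, Measure.restrict_restrict hs.compl,
      Set.compl_inter_self, Measure.restrict_empty, lintegral_zero_measure]
    simp
  rw [ae_iff]
  exact h0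

private lemma cdf_bound (h : ℝ) (hh : 0 < h) :
    (∫ t in Set.Icc (0:ℝ) (1/8), (Real.cosh ((t - 1) / h))⁻¹) ≤
      (1/8) * ∫ t in Set.Icc (0:ℝ) 1, (Real.cosh ((t - 1) / h))⁻¹ ∧
    0 < ∫ t in Set.Icc (0:ℝ) 1, (Real.cosh ((t - 1) / h))⁻¹ := by
  have hcont : Continuous fun t : ℝ => (Real.cosh ((t - 1) / h))⁻¹ :=
    (Real.continuous_cosh.comp ((continuous_id.sub continuous_const).div_const h)).inv₀
      fun t => (Real.cosh_pos _).ne'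
  have hnn : ∀ t : ℝ, 0 ≤ (Real.cosh ((t - 1) / h))⁻¹ :=
    fun t => inv_nonneg.mpr (Real.cosh_pos _).le
  have hmono : ∀ s t : ℝ, s ≤ t → t ≤ 1 →
      (Real.cosh ((s - 1) / h))⁻¹ ≤ (Real.cosh ((t - 1) / h))⁻¹ := by
    intro s t hst ht1
    apply inv_anti₀ (Real.cosh_pos _)
    rw [Real.cosh_le_cosh]
    have h1 : (t - 1) / h ≤ 0 := div_nonpos_of_nonpos_of_nonneg (by linarith) hh.le
    have h2 : (s - 1) / h ≤ 0 := div_nonpos_of_nonpos_of_nonneg (by linarith) hh.le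
    rw [abs_of_nonpos h1, abs_of_nonpos h2]
    have := mul_le_mul_of_nonneg_right (show s - 1 ≤ t - 1 by linarith)
      (inv_nonneg.mpr hh.le)
    rw [div_eq_mul_inv, div_eq_mul_inv]
    linarith
  set M : ℝ := (Real.cosh ((1/8 - 1) / h))⁻¹ with hM
  have hMpos : 0 < M := inv_pos.mpr (Real.cosh_pos _)
  have hA : (∫ t in Set.Icc (0:ℝ) (1/8), (Real.cosh ((t - 1) / h))⁻¹) ≤ (1/8) * M := by
    calc (∫ t in Set.Icc (0:ℝ) (1/8), (Real.cosh ((t - 1) / h))⁻¹)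
        ≤ ∫ _t in Set.Icc (0:ℝ) (1/8), M :=
          setIntegral_mono_on hcont.integrableOn_Icc
            ((integrableOn_const_iff).mpr (Or.inr measure_Icc_lt_top)) measurableSet_Icc
            (fun x hx => hmono x (1/8) hx.2 (by norm_num))
      _ = (1/8) * M := by
          rw [setIntegral_const, measureReal_def, Real.volume_Icc, smul_eq_mul,
            show (1/8 - 0 : ℝ) = 1/8 by norm_num, ENNReal.toReal_ofReal (by norm_num)]
  have hB : (7/8) * M ≤ ∫ t in Set.Icc (1/8:ℝ) 1, (Real.cosh ((t - 1) / h))⁻¹ := by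
    calc (7/8) * M = ∫ _t in Set.Icc (1/8:ℝ) 1, M := by
          rw [setIntegral_const, measureReal_def, Real.volume_Icc, smul_eq_mul,
            show (1 - 1/8 : ℝ) = 7/8 by norm_num, ENNReal.toReal_ofReal (by norm_num)]
      _ ≤ _ :=
          setIntegral_mono_on ((integrableOn_const_iff).mpr (Or.inr measure_Icc_lt_top))
            hcont.integrableOn_Icc measurableSet_Icc
            (fun x hx => hmono (1/8) x hx.1 hx.2)
  have hsplit : (∫ t in Set.Icc (0:ℝ) 1, (Real.cosh ((t - 1) / h))⁻¹) =
      (∫ t in Set.Icc (0:ℝ) (1/8), (Real.cosh ((t - 1) / h))⁻¹) +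
      (∫ t in Set.Icc (1/8:ℝ) 1, (Real.cosh ((t - 1) / h))⁻¹) := by
    rw [integral_Icc_eq_integral_Ioc, integral_Icc_eq_integral_Ioc,
      integral_Icc_eq_integral_Ioc,
      ← intervalIntegral.integral_of_le (show (0:ℝ) ≤ 1 by norm_num),
      ← intervalIntegral.integral_of_le (show (0:ℝ) ≤ 1/8 by norm_num),
      ← intervalIntegral.integral_of_le (show (1/8:ℝ) ≤ 1 by norm_num),
      intervalIntegral.integral_add_adjacent_intervals
        (hcont.intervalIntegrable _ _) (hcont.intervalIntegrable _ _)]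
  have hAnn : 0 ≤ ∫ t in Set.Icc (0:ℝ) (1/8), (Real.cosh ((t - 1) / h))⁻¹ :=
    setIntegral_nonneg measurableSet_Icc fun x _ => hnn x
  constructor
  · linarith
  · linarith

/-- Gap in the two-point family: `m̃` has density proportional to `t ↦ sech((t−1)/h)`
on `[0,1]`, `σ̃²` is independent with density proportional to `t ↦ sech(t/h)` on
`[0,1/4]`, `W = m̃² + σ̃²`, and `Φ(p) = E|p − m̃| + E|p² − W|`.  Then for `p₀ = 1/16`
and `0 < ε ≤ 1/16`, with `p₁ = p₀ + ε`, one has `Φ(p₀) − Φ(p₁) ≥ (9/16)ε ≥ ε/2`. -/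
theorem two_point_gap
    {Ω : Type*} [MeasurableSpace Ω] (μ : Measure Ω) [IsProbabilityMeasure μ]
    (h : ℝ) (hh : 0 < h)
    (mt sg : Ω → ℝ) (hmt : Measurable mt) (hsg : Measurable sg)
    (hindep : IndepFun mt sg μ)
    (hlaw1 : Measure.map mt μ =
      (ENNReal.ofReal (∫ t in Set.Icc (0:ℝ) 1, (Real.cosh ((t - 1) / h))⁻¹))⁻¹ •
        ((volume.restrict (Set.Icc (0:ℝ) 1)).withDensity
          fun t => ENNReal.ofReal ((Real.cosh ((t - 1) / h))⁻¹)))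
    (hlaw2 : Measure.map sg μ =
      (ENNReal.ofReal (∫ t in Set.Icc (0:ℝ) (1/4), (Real.cosh (t / h))⁻¹))⁻¹ •
        ((volume.restrict (Set.Icc (0:ℝ) (1/4))).withDensity
          fun t => ENNReal.ofReal ((Real.cosh (t / h))⁻¹)))
    (ε : ℝ) (hε0 : 0 < ε) (hε : ε ≤ 1/16) :
    (9/16) * ε ≤
      ((∫ ω, |(1/16 : ℝ) - mt ω| ∂μ) +
        ∫ ω, |((1/16 : ℝ)) ^ 2 - (mt ω ^ 2 + sg ω)| ∂μ) -
      ((∫ ω, |(1/16 + ε) - mt ω| ∂μ) +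
        ∫ ω, |(1/16 + ε) ^ 2 - (mt ω ^ 2 + sg ω)| ∂μ) ∧
    ε / 2 ≤ (9/16) * ε := by
  refine ⟨?_, by linarith⟩
  -- a.e. bounds on mt and sg
  have h_ae1 : ∀ᵐ ω ∂μ, mt ω ∈ Set.Icc (0:ℝ) 1 :=
    ae_mem_of_law μ mt hmt measurableSet_Icc _ _ hlaw1
  have h_ae2 : ∀ᵐ ω ∂μ, sg ω ∈ Set.Icc (0:ℝ) (1/4) :=
    ae_mem_of_law μ sg hsg measurableSet_Icc _ _ hlaw2
  -- integrability
  have hint1 : ∀ p : ℝ, Integrable (fun ω => |p - mt ω|) μ := by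
    intro p
    refine (integrable_const (|p| + 1)).mono'
      ((measurable_const.sub hmt).abs.aestronglyMeasurable) ?_
    filter_upwards [h_ae1] with ω hω
    rw [Real.norm_eq_abs, abs_abs]
    rcases abs_cases p with ⟨hp, _⟩ | ⟨hp, _⟩ <;>
      rcases abs_cases (p - mt ω) with ⟨hq, _⟩ | ⟨hq, _⟩ <;>
      · have := hω.1; have := hω.2; linarith
  have hint2 : ∀ p : ℝ, Integrable (fun ω => |p ^ 2 - (mt ω ^ 2 + sg ω)|) μ := by
    intro p
    refine (integrable_const (p ^ 2 + 2)).mono'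
      ((measurable_const.sub ((hmt.pow_const 2).add hsg)).abs.aestronglyMeasurable) ?_
    filter_upwards [h_ae1, h_ae2] with ω hω1 hω2
    rw [Real.norm_eq_abs, abs_abs]
    have h1 := hω1.1; have h2 := hω1.2; have h3 := hω2.1; have h4 := hω2.2
    have hsq : mt ω ^ 2 ≤ 1 := by nlinarith
    have hsq0 : 0 ≤ mt ω ^ 2 := sq_nonneg _
    rcases abs_cases (p ^ 2 - (mt ω ^ 2 + sg ω)) with ⟨hq, _⟩ | ⟨hq, _⟩ <;>
      nlinarith [sq_nonneg p]
  -- ψ-part: second integrals differ by at most p₁² − p₀²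
  have hJ : (∫ ω, |(1/16 + ε) ^ 2 - (mt ω ^ 2 + sg ω)| ∂μ) -
      ((1/16 + ε) ^ 2 - (1/16 : ℝ) ^ 2) ≤
      ∫ ω, |((1/16 : ℝ)) ^ 2 - (mt ω ^ 2 + sg ω)| ∂μ := by
    have hmono : ∀ ω, |(1/16 + ε) ^ 2 - (mt ω ^ 2 + sg ω)| -
        ((1/16 + ε) ^ 2 - (1/16 : ℝ) ^ 2) ≤ |((1/16 : ℝ)) ^ 2 - (mt ω ^ 2 + sg ω)| := by
      intro ω
      have habs := abs_sub_abs_le_abs_sub ((1/16 + ε) ^ 2 - (mt ω ^ 2 + sg ω))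
        (((1/16 : ℝ)) ^ 2 - (mt ω ^ 2 + sg ω))
      have heq : |(1/16 + ε) ^ 2 - (mt ω ^ 2 + sg ω) -
          (((1/16 : ℝ)) ^ 2 - (mt ω ^ 2 + sg ω))| = (1/16 + ε) ^ 2 - (1/16 : ℝ) ^ 2 := by
        rw [show (1/16 + ε) ^ 2 - (mt ω ^ 2 + sg ω) -
            (((1/16 : ℝ)) ^ 2 - (mt ω ^ 2 + sg ω)) = (1/16 + ε) ^ 2 - (1/16 : ℝ) ^ 2 by ring]
        exact abs_of_nonneg (by nlinarith)
      linarith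
    have := integral_mono ((hint2 _).sub (integrable_const _)) (hint2 _) hmono
    simp only [Pi.sub_apply] at this
    rw [integral_sub (hint2 _) (integrable_const _), integral_const, measureReal_def, measure_univ,
      ENNReal.toReal_one, one_smul] at this
    exact this
  -- the CDF bound: μ(mt < 1/16 + ε) ≤ 1/8
  obtain ⟨hcb1, hcb2⟩ := cdf_bound h hh
  have hcont : Continuous fun t : ℝ => (Real.cosh ((t - 1) / h))⁻¹ :=
    (Real.continuous_cosh.comp ((continuous_id.sub continuous_const).div_const h)).inv₀
      fun t => (Real.cosh_pos _).ne'
  have hFmeas : MeasurableSet (mt ⁻¹' Set.Iio (1/16 + ε)) := hmt measurableSet_Iio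
  have hF : μ (mt ⁻¹' Set.Iio (1/16 + ε)) ≤ ENNReal.ofReal (1/8) := by
    rw [← Measure.map_apply hmt measurableSet_Iio, hlaw1, Measure.smul_apply,
      withDensity_apply _ measurableSet_Iio, Measure.restrict_restrict measurableSet_Iio,
      smul_eq_mul]
    have hsub : Set.Iio (1/16 + ε) ∩ Set.Icc (0:ℝ) 1 ⊆ Set.Icc (0:ℝ) (1/8) := by
      intro x hx
      exact ⟨hx.2.1, by have := hx.1; simp only [Set.mem_Iio] at this; linarith⟩
    have hL : (∫⁻ a in Set.Iio (1/16 + ε) ∩ Set.Icc (0:ℝ) 1,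
        ENNReal.ofReal (Real.cosh ((a - 1) / h))⁻¹) ≤
        ENNReal.ofReal (∫ t in Set.Icc (0:ℝ) (1/8), (Real.cosh ((t - 1) / h))⁻¹) := by
      rw [ofReal_integral_eq_lintegral_ofReal hcont.integrableOn_Icc
        (ae_of_all _ fun t => inv_nonneg.mpr (Real.cosh_pos _).le)]
      exact lintegral_mono_set hsub
    have hC0 : ENNReal.ofReal (∫ t in Set.Icc (0:ℝ) 1, (Real.cosh ((t - 1) / h))⁻¹) ≠ 0 :=
      (ENNReal.ofReal_pos.mpr hcb2).ne'
    calc (ENNReal.ofReal (∫ t in Set.Icc (0:ℝ) 1, (Real.cosh ((t - 1) / h))⁻¹))⁻¹ *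
          ∫⁻ a in Set.Iio (1/16 + ε) ∩ Set.Icc (0:ℝ) 1,
            ENNReal.ofReal (Real.cosh ((a - 1) / h))⁻¹
        ≤ (ENNReal.ofReal (∫ t in Set.Icc (0:ℝ) 1, (Real.cosh ((t - 1) / h))⁻¹))⁻¹ *
          ENNReal.ofReal (∫ t in Set.Icc (0:ℝ) (1/8), (Real.cosh ((t - 1) / h))⁻¹) :=
          mul_le_mul_right hL _
      _ ≤ (ENNReal.ofReal (∫ t in Set.Icc (0:ℝ) 1, (Real.cosh ((t - 1) / h))⁻¹))⁻¹ *
          (ENNReal.ofReal (1/8) *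
            ENNReal.ofReal (∫ t in Set.Icc (0:ℝ) 1, (Real.cosh ((t - 1) / h))⁻¹)) := by
          apply mul_le_mul_right
          rw [← ENNReal.ofReal_mul (by norm_num : (0:ℝ) ≤ 1/8)]
          exact ENNReal.ofReal_le_ofReal hcb1
      _ = ENNReal.ofReal (1/8) := by
          rw [mul_comm (ENNReal.ofReal (1/8)), ← mul_assoc,
            ENNReal.inv_mul_cancel hC0 ENNReal.ofReal_ne_top, one_mul]
  have hF' : (μ (mt ⁻¹' Set.Iio (1/16 + ε))).toReal ≤ 1/8 :=
    ENNReal.toReal_le_of_le_ofReal (by norm_num) hF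
  have hF0 : 0 ≤ (μ (mt ⁻¹' Set.Iio (1/16 + ε))).toReal := ENNReal.toReal_nonneg
  -- φ-part
  have hlow : ∀ ω, |(1/16 + ε) - mt ω| + ε -
      (mt ⁻¹' Set.Iio (1/16 + ε)).indicator (fun _ => 2 * ε) ω ≤ |(1/16 : ℝ) - mt ω| := by
    intro ω
    by_cases hc : (1/16 + ε) ≤ mt ω
    · rw [Set.indicator_of_notMem (by simp only [Set.mem_preimage, Set.mem_Iio]; exact not_lt.mpr hc)]
      rw [abs_of_nonpos (by linarith), abs_of_nonpos (by linarith)]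
      linarith
    · push_neg at hc
      rw [Set.indicator_of_mem (by simp only [Set.mem_preimage, Set.mem_Iio]; exact hc)]
      have habs := abs_sub_abs_le_abs_sub ((1/16 + ε) - mt ω) ((1/16 : ℝ) - mt ω)
      have heq : |(1/16 + ε) - mt ω - ((1/16 : ℝ) - mt ω)| = ε := by
        rw [show (1/16 + ε) - mt ω - ((1/16 : ℝ) - mt ω) = ε by ring,
          abs_of_nonneg hε0.le]
      linarith
  have hintind : Integrable ((mt ⁻¹' Set.Iio (1/16 + ε)).indicator fun _ => 2 * ε) μ :=
    (integrable_const (2 * ε)).indicator hFmeas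
  have ha : Integrable (fun ω => |(1/16 + ε) - mt ω| + ε) μ :=
    (hint1 _).add (integrable_const ε)
  have hI := integral_mono (ha.sub hintind) (hint1 _) hlow
  simp only [Pi.sub_apply] at hI
  rw [integral_sub ha hintind, integral_add (hint1 _) (integrable_const ε), integral_const,
    measureReal_def, measure_univ, ENNReal.toReal_one, one_smul, integral_indicator_const _ hFmeas,
    smul_eq_mul, measureReal_def] at hI
  -- combine
  have hprod1 : (μ (mt ⁻¹' Set.Iio (1/16 + ε))).toReal * (2 * ε) ≤ (1/8) * (2 * ε) :=
    mul_le_mul_of_nonneg_right hF' (by linarith)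
  nlinarith [mul_le_mul_of_nonneg_left hε hε0.le]
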